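/- Suppose the n×m matrix P has rank m and set A = (P'P)^{-1} P'. Fix i with f_i > 0, let p_i denote the i-th row of P, and define the n-vectors U and V by U' = u' A and V' = v' A, where u' = t' diag(p_i) (i.e., u_j = t_j p_{ij}) and v' = p_i. Then the posterior expectation E{t(Θ) | X = x_i} = Σ_j t_j p_{ij} g_j / f_i can be written purely in terms of the marginal f = P g as E{t(Θ) | X = x_i} = U' f / V' f (Bayes rule in terms of f), provided V' f ≠ 0. -/

import Mathlib

open Matrix

lemma aux_isUnit {m n : ℕ} (P : Matrix (Fin n) (Fin m) ℝ) (hrank : P.rank = m) :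
    IsUnit (Pᵀ * P) := by
  rw [← Matrix.mulVec_injective_iff_isUnit]
  have hker : LinearMap.ker (Pᵀ * P).mulVecLin = ⊥ := by
    rw [Matrix.ker_mulVecLin_transpose_mul_self]
    have h1 := LinearMap.finrank_range_add_finrank_ker P.mulVecLin
    rw [show Module.finrank ℝ (LinearMap.range P.mulVecLin) = P.rank from rfl, hrank,
      Module.finrank_fintype_fun_eq_card, Fintype.card_fin] at h1
    have h2 : Module.finrank ℝ (LinearMap.ker P.mulVecLin) = 0 := by omega
    exact Submodule.finrank_eq_zero.mp h2
  have : Function.Injective (Pᵀ * P).mulVecLin := by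
    rw [← LinearMap.ker_eq_bot]; exact hker
  exact this

/-- Bayes rule in terms of `f`: with `A = (PᵀP)⁻¹Pᵀ`, `u' = t' diag(pᵢ)`, `v' = pᵢ`,
`U' = u'A`, `V' = v'A`, the posterior expectation `E{t(Θ) | X = xᵢ} = ∑ⱼ tⱼ pᵢⱼ gⱼ / fᵢ`
equals `U'f / V'f`, provided `V'f ≠ 0`. -/
theorem stmt2 {m n : ℕ} (P : Matrix (Fin n) (Fin m) ℝ) (hrank : P.rank = m)
    (g : Fin m → ℝ) (hg0 : ∀ j, 0 ≤ g j) (hg1 : ∑ j, g j = 1)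
    (hP0 : ∀ i j, 0 ≤ P i j) (hP1 : ∀ j, ∑ i, P i j = 1)
    (f : Fin n → ℝ) (hf : f = P.mulVec g)
    (t : Fin m → ℝ) (i : Fin n) (hfi : 0 < f i)
    (A : Matrix (Fin m) (Fin n) ℝ) (hA : A = (Pᵀ * P)⁻¹ * Pᵀ)
    (u v : Fin m → ℝ) (hu : ∀ j, u j = t j * P i j) (hv : ∀ j, v j = P i j)
    (U V : Fin n → ℝ) (hU : U = A.vecMul u) (hV : V = A.vecMul v)
    (hVf : V ⬝ᵥ f ≠ 0) :
    (∑ j, t j * P i j * g j) / f i = (U ⬝ᵥ f) / (V ⬝ᵥ f) := by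
  have hunit := aux_isUnit P hrank
  have hAf : A.mulVec f = g := by
    rw [hf, hA, Matrix.mulVec_mulVec, Matrix.mul_assoc,
      Matrix.nonsing_inv_mul _ ((Matrix.isUnit_iff_isUnit_det _).mp hunit),
      Matrix.one_mulVec]
  have hUf : U ⬝ᵥ f = ∑ j, t j * P i j * g j := by
    rw [hU, ← Matrix.dotProduct_mulVec, hAf, dotProduct]
    exact Finset.sum_congr rfl fun j _ => by rw [hu]
  have hVff : V ⬝ᵥ f = f i := by
    rw [hV, ← Matrix.dotProduct_mulVec, hAf, dotProduct, hf]
    simp only [Matrix.mulVec, dotProduct]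
    exact Finset.sum_congr rfl fun j _ => by rw [hv]
  rw [hUf, hVff]
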